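/- Let V = ℝ^d with d ≥ 1, equipped with the componentwise partial order and the 1-norm. Let M ⊆ V be an additive submonoid with M ⊆ ℝ_{≥0}^d, and let M₀ and N₀ be submonoids of M with M = M₀ + N₀. If M₀ satisfies the ACCP and N₀ is finitely generated, then M satisfies the ACCP. -/

import Mathlib

/-- An atom of the additive submonoid `M`: a nonzero element of `M` that is not the
sum of two nonzero elements of `M`. -/
def IsAtomOf {α : Type*} [AddCommMonoid α] (M : AddSubmonoid α) (a : α) : Prop :=
  a ∈ M ∧ a ≠ 0 ∧ ∀ b ∈ M, ∀ c ∈ M, b + c = a → b = 0 ∨ c = 0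

/-- The length set of `q` in `M`: the set of all `ℓ` such that `q` is a sum of `ℓ`
atoms of `M` (counted with multiplicity). -/
def LengthSet {α : Type*} [AddCommMonoid α] (M : AddSubmonoid α) (q : α) : Set ℕ :=
  {ℓ | ∃ s : Multiset α, Multiset.card s = ℓ ∧ (∀ a ∈ s, IsAtomOf M a) ∧ s.sum = q}

/-- The additive submonoid `M` satisfies the ACCP: every ascending chain of principal
ideals `f n + M ⊆ f (n+1) + M` stabilizes. -/
def AddACCP {α : Type*} [AddCommMonoid α] (M : AddSubmonoid α) : Prop :=
  ∀ f : ℕ → α, (∀ n, f n ∈ M) → (∀ n, ∃ c ∈ M, f n = f (n + 1) + c) →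
    ∃ N, ∀ n ≥ N, ∃ c ∈ M, f n = f N + c

/-- The Puiseux monoid generated by the reciprocals of the elements of `P`. -/
def MP (P : Set ℕ) : AddSubmonoid ℚ :=
  AddSubmonoid.closure {q : ℚ | ∃ p ∈ P, q = 1 / (p : ℚ)}

theorem stmt11 (d : ℕ) (hd : 1 ≤ d) (M M₀ N₀ : AddSubmonoid (Fin d → ℝ))
    (hpos : ∀ x ∈ M, ∀ i, 0 ≤ x i)
    (hM0 : M₀ ≤ M) (hN0 : N₀ ≤ M)
    (hsum : ∀ x ∈ M, ∃ a ∈ M₀, ∃ b ∈ N₀, x = a + b)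
    (hacc : AddACCP M₀)
    (hfg : ∃ S : Finset (Fin d → ℝ), AddSubmonoid.closure (S : Set (Fin d → ℝ)) = N₀) :
    AddACCP M := by
  classical
  obtain ⟨S, hS⟩ := hfg
  -- the additive functional ν x = ∑ i, x i
  set ν : (Fin d → ℝ) →+ ℝ :=
    { toFun := fun x => ∑ i, x i
      map_zero' := by simp
      map_add' := by intro x y; simp [Finset.sum_add_distrib] } with hνdef
  have νeq : ∀ x, ν x = ∑ i, x i := fun x => rfl
  have νnn : ∀ x ∈ M, 0 ≤ ν x := by
    intro x hx
    rw [νeq]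
    exact Finset.sum_nonneg fun i _ => hpos x hx i
  have νzero : ∀ x ∈ M, ν x = 0 → x = 0 := by
    intro x hx h0
    rw [νeq] at h0
    funext i
    exact (Finset.sum_eq_zero_iff_of_nonneg fun i _ => hpos x hx i).mp h0 i (Finset.mem_univ i)
  -- a uniform positive lower bound ε on ν of nonzero generators
  obtain ⟨ε, hε, hεle⟩ : ∃ ε > (0:ℝ), ∀ g ∈ S, g ≠ 0 → ε ≤ ν g := by
    by_cases hT : (S.filter (fun g => g ≠ 0)).Nonempty
    · refine ⟨(S.filter (fun g => g ≠ 0)).inf' hT ν, ?_, ?_⟩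
      · refine (Finset.lt_inf'_iff hT).mpr ?_
        intro g hg
        rw [Finset.mem_filter] at hg
        have hgM : g ∈ M := hN0 (hS ▸ AddSubmonoid.subset_closure hg.1)
        exact lt_of_le_of_ne (νnn g hgM) fun h => hg.2 (νzero g hgM h.symm)
      · intro g hg hg0
        exact Finset.inf'_le ν (Finset.mem_filter.mpr ⟨hg, hg0⟩)
    · exact ⟨1, one_pos, fun g hg h0 => absurd ⟨g, Finset.mem_filter.mpr ⟨hg, h0⟩⟩ hT⟩
  -- filtering out zeros from a multiset does not change the sum
  have hfilter : ∀ l : Multiset (Fin d → ℝ),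
      (l.filter (fun g => g ≠ 0)).sum = l.sum := by
    intro l
    induction l using Multiset.induction with
    | empty => simp
    | cons g l ih =>
      by_cases hg : g = 0
      · subst hg
        rw [Multiset.filter_cons_of_neg (p := fun g => g ≠ 0) _ (by simp), ih,
          Multiset.sum_cons, zero_add]
      · rw [Multiset.filter_cons_of_pos (p := fun g => g ≠ 0) _ hg, Multiset.sum_cons,
          Multiset.sum_cons, ih]
  -- lower bound on ν of sums of nonzero generators
  have hcardle : ∀ l : Multiset (Fin d → ℝ), (∀ g ∈ l, g ∈ S ∧ g ≠ 0) →
      (Multiset.card l : ℝ) * ε ≤ ν l.sum := by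
    intro l
    induction l using Multiset.induction with
    | empty => simp
    | cons g l ih =>
      intro hmem
      have h1 := hεle g (hmem g (Multiset.mem_cons_self g l)).1
        (hmem g (Multiset.mem_cons_self g l)).2
      have h2 := ih fun x hx => hmem x (Multiset.mem_cons_of_mem hx)
      simp only [Multiset.sum_cons, Multiset.card_cons, map_add]
      push_cast
      nlinarith
  -- lower bound ε on ν of nonzero elements of N₀
  have hN₀lb : ∀ x ∈ N₀, x ≠ 0 → ε ≤ ν x := by
    intro x hx hx0
    rw [← hS] at hx
    obtain ⟨l, hl, hlsum⟩ := AddSubmonoid.exists_multiset_of_mem_closure hx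
    have hx' : x = (l.filter (fun g => g ≠ 0)).sum := by rw [hfilter, hlsum]
    have hmem : ∀ g ∈ l.filter (fun g => g ≠ 0), g ∈ S ∧ g ≠ 0 := by
      intro g hg
      exact ⟨hl g (Multiset.mem_of_mem_filter hg), (Multiset.mem_filter.mp hg).2⟩
    have hcard : 1 ≤ Multiset.card (l.filter (fun g => g ≠ 0)) := by
      rcases Multiset.empty_or_exists_mem (l.filter (fun g => g ≠ 0)) with h | h
      · exact absurd (by rw [hx', h]; simp) hx0
      · obtain ⟨g, hg⟩ := h
        exact Multiset.card_pos.mpr (fun h0 => by simp [h0] at hg)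
    have := hcardle _ hmem
    rw [← hx'] at this
    calc ε = 1 * ε := (one_mul ε).symm
      _ ≤ (Multiset.card (l.filter (fun g => g ≠ 0)) : ℝ) * ε := by
          apply mul_le_mul_of_nonneg_right _ hε.le
          exact_mod_cast hcard
      _ ≤ ν x := this
  -- main proof
  intro f hf hfc'
  choose c hcM hfc using hfc'
  choose a haM b hbN hab using fun n => hsum (c n) (hcM n)
  -- telescoping
  have tele : ∀ p j, f p = f (p + j) + ∑ k ∈ Finset.Ico p (p + j), c k := by
    intro p j
    induction j with
    | zero => simp
    | succ j ih =>
      show f p = f (p + j + 1) + ∑ k ∈ Finset.Ico p (p + j + 1), c k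
      rw [Finset.sum_Ico_succ_top (Nat.le_add_right p j), ih, hfc (p + j)]
      show f (p + j + 1) + c (p + j) + _ = _
      ring
  have tele' : ∀ p q, p ≤ q → f p = f q + ∑ k ∈ Finset.Ico p q, c k := by
    intro p q h
    obtain ⟨j, rfl⟩ := Nat.exists_eq_add_of_le h
    exact tele p j
  have νc_nn : ∀ n, 0 ≤ ν (c n) := fun n => νnn _ (hcM n)
  have sum_le : ∀ p q, p ≤ q → ∑ k ∈ Finset.Ico p q, ν (c k) ≤ ν (f p) := by
    intro p q h
    have h1 := congrArg ν (tele' p q h)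
    rw [map_add, map_sum] at h1
    have := νnn _ (hf q)
    linarith
  have νf_le : ∀ n, ν (f n) ≤ ν (f 0) := by
    intro n
    have h1 := congrArg ν (tele' 0 n (Nat.zero_le n))
    rw [map_add, map_sum] at h1
    have h2 : (0:ℝ) ≤ ∑ k ∈ Finset.Ico 0 n, ν (c k) :=
      Finset.sum_nonneg fun k _ => νc_nn k
    linarith
  -- Step 1: eventually the N₀-part of the differences vanishes
  have hband : {n | b n ≠ 0}.Finite := by
    by_contra hinf
    have hinf' : {n | b n ≠ 0}.Infinite := hinf
    obtain ⟨T, hTsub, hTcard⟩ := hinf'.exists_subset_card_eq (⌈ν (f 0) / ε⌉₊ + 1)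
    have h1 : (T.card : ℝ) * ε ≤ ∑ k ∈ T, ν (c k) := by
      have hptwise : ∀ k ∈ T, ε ≤ ν (c k) := by
        intro k hk
        have hbk : b k ≠ 0 := hTsub hk
        have hε' := hN₀lb (b k) (hbN k) hbk
        have ha' := νnn (a k) (hM0 (haM k))
        have hck : ν (c k) = ν (a k) + ν (b k) := by rw [← map_add, ← hab k]
        linarith
      calc (T.card : ℝ) * ε = ∑ _k ∈ T, ε := by rw [Finset.sum_const, nsmul_eq_mul]
        _ ≤ ∑ k ∈ T, ν (c k) := Finset.sum_le_sum hptwise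
    have h2 : ∑ k ∈ T, ν (c k) ≤ ν (f 0) := by
      have hsub : T ⊆ Finset.Ico 0 (T.sup id + 1) := by
        intro k hk
        simp only [Finset.mem_Ico]
        exact ⟨Nat.zero_le k, Nat.lt_succ_of_le (Finset.le_sup (f := id) hk)⟩
      calc ∑ k ∈ T, ν (c k) ≤ ∑ k ∈ Finset.Ico 0 (T.sup id + 1), ν (c k) :=
            Finset.sum_le_sum_of_subset_of_nonneg hsub fun k _ _ => νc_nn k
        _ ≤ ν (f 0) := sum_le 0 _ (Nat.zero_le _)
    have h3 : ν (f 0) ≤ (⌈ν (f 0) / ε⌉₊ : ℝ) * ε := by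
      rw [← div_le_iff₀ hε]
      exact Nat.le_ceil _
    rw [hTcard] at h1
    push_cast at h1
    nlinarith
  obtain ⟨N₁, hN₁⟩ : ∃ N₁, ∀ n ≥ N₁, b n = 0 := by
    obtain ⟨m, hm⟩ := hband.bddAbove
    refine ⟨m + 1, fun n hn => by_contra fun h => ?_⟩
    have := hm (Set.mem_setOf.mpr h)
    omega
  have hcM₀ : ∀ n ≥ N₁, c n ∈ M₀ := by
    intro n hn
    have h := hab n
    rw [hN₁ n hn, add_zero] at h
    rw [h]
    exact haM n
  -- Step 2: decompose f n = α n + β n and pigeonhole on β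
  choose α hαM β hβN hαβ using fun n => hsum (f n) (hf n)
  have hrep : ∀ n, ∃ l : Multiset (Fin d → ℝ), (∀ g ∈ l, g ∈ (S : Set (Fin d → ℝ))) ∧
      l.sum = β n := fun n =>
    AddSubmonoid.exists_multiset_of_mem_closure (hS ▸ hβN n)
  choose s hsmem hssum using hrep
  set s' : ℕ → Multiset (Fin d → ℝ) := fun n => (s n).filter (fun g => g ≠ 0) with hs'
  have hs'sum : ∀ n, (s' n).sum = β n := fun n => by rw [hs']; rw [hfilter, hssum]
  set B : ℕ := ⌈ν (f 0) / ε⌉₊ with hB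
  have hs'card : ∀ n, Multiset.card (s' n) ≤ B := by
    intro n
    have hmem : ∀ g ∈ s' n, g ∈ S ∧ g ≠ 0 := fun g hg =>
      ⟨hsmem n g (Multiset.mem_of_mem_filter hg), (Multiset.mem_filter.mp hg).2⟩
    have h1 := hcardle _ hmem
    rw [hs'sum n] at h1
    have h2 : ν (β n) ≤ ν (f n) := by
      have : ν (f n) = ν (α n) + ν (β n) := by rw [← map_add, ← hαβ n]
      have := νnn (α n) (hM0 (hαM n))
      linarith
    have h3 : ν (f 0) ≤ (B : ℝ) * ε := by
      rw [hB, ← div_le_iff₀ hε]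
      exact Nat.le_ceil _
    have h4 : (Multiset.card (s' n) : ℝ) * ε ≤ (B : ℝ) * ε := by
      have := νf_le n
      linarith
    exact_mod_cast le_of_mul_le_mul_right h4 hε
  set t : Multiset (Fin d → ℝ) := B • S.val with ht
  have hle : ∀ n, s' n ≤ t := by
    intro n
    rw [Multiset.le_iff_count]
    intro g
    by_cases hg : g ∈ s' n
    · have hgS : g ∈ S := hsmem n g (Multiset.mem_of_mem_filter hg)
      calc Multiset.count g (s' n) ≤ Multiset.card (s' n) := Multiset.count_le_card g _
        _ ≤ B := hs'card n
        _ = Multiset.count g t := by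
            rw [ht, Multiset.count_nsmul, Multiset.count_eq_one_of_mem S.nodup hgS, mul_one]
    · simp [Multiset.count_eq_zero_of_notMem hg]
  set T : Finset (Multiset (Fin d → ℝ)) := t.powerset.toFinset with hTdef
  have hφmem : ∀ n : ℕ, s' (N₁ + n) ∈ T := by
    intro n
    rw [hTdef, Multiset.mem_toFinset, Multiset.mem_powerset]
    exact hle _
  set φ : ℕ → {x // x ∈ T} := fun n => ⟨s' (N₁ + n), hφmem n⟩ with hφ
  obtain ⟨v, hv⟩ := Finite.exists_infinite_fiber φ
  set p : ℕ → Prop := fun n => φ n = v with hp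
  have hpinf : (setOf p).Infinite := by
    rw [Set.infinite_coe_iff] at hv
    exact hv
  set m : ℕ → ℕ := fun i => N₁ + Nat.nth p i with hm
  have hmmem : ∀ i, s' (m i) = (v : Multiset (Fin d → ℝ)) := by
    intro i
    have := Nat.nth_mem_of_infinite hpinf i
    exact congrArg Subtype.val this
  set w : Fin d → ℝ := (v : Multiset (Fin d → ℝ)).sum with hw
  have hβw : ∀ i, β (m i) = w := fun i => by rw [← hs'sum (m i), hmmem i]
  have hmono : StrictMono m := fun i j hij => by
    simp only [hm]
    exact Nat.add_lt_add_left (Nat.nth_strictMono hpinf hij) N₁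
  have hmge : ∀ i, N₁ + i ≤ m i := fun i =>
    Nat.add_le_add_left ((Nat.nth_strictMono hpinf).id_le i) N₁
  -- the chain in M₀
  set h : ℕ → (Fin d → ℝ) := fun i => α (m i) with hh
  have hfm : ∀ i, f (m i) = h i + w := fun i => by rw [hh, ← hβw i]; exact hαβ (m i)
  have hchain : ∀ i, ∃ D ∈ M₀, h i = h (i + 1) + D := by
    intro i
    refine ⟨∑ k ∈ Finset.Ico (m i) (m (i + 1)), c k, ?_, ?_⟩
    · apply AddSubmonoid.sum_mem
      intro k hk
      rw [Finset.mem_Ico] at hk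
      exact hcM₀ k (le_trans (Nat.le_add_right N₁ i) (le_trans (hmge i) hk.1))
    · have he := tele' (m i) (m (i + 1)) (hmono (Nat.lt_succ_self i)).le
      rw [hfm i, hfm (i + 1)] at he
      have : h i + w = (h (i + 1) + ∑ k ∈ Finset.Ico (m i) (m (i + 1)), c k) + w := by
        rw [he]; ring
      exact add_right_cancel this
  obtain ⟨I, hI⟩ := hacc h (fun i => hαM (m i)) hchain
  -- all differences beyond m I vanish
  have hczero : ∀ k, m I ≤ k → c k = 0 := by
    intro k hk
    set i : ℕ := max (I + 1) (k + 1) with hi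
    have hIi : I ≤ i := le_trans (Nat.le_succ I) (le_max_left _ _)
    have hki : k < m i := lt_of_lt_of_le (Nat.lt_succ_self k)
      (le_trans (le_trans (le_max_right _ _) (Nat.le_add_left _ N₁)) (hmge i))
    obtain ⟨e, heM, hei⟩ := hI i hIi
    have hfe : f (m i) = f (m I) + e := by
      rw [hfm i, hfm I, hei]; ring
    have htel := tele' (m I) (m i) (hmono.monotone hIi)
    rw [hfe] at htel
    have h0 : e + ∑ j ∈ Finset.Ico (m I) (m i), c j = 0 := by
      have h1 : f (m I) = f (m I) + (e + ∑ j ∈ Finset.Ico (m I) (m i), c j) := by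
        rw [← add_assoc]; exact htel
      exact (left_eq_add.mp h1)
    have hν0 := congrArg ν h0
    rw [map_add, map_sum, map_zero] at hν0
    have hνe := νnn e (hM0 heM)
    have hνsum : (0:ℝ) ≤ ∑ j ∈ Finset.Ico (m I) (m i), ν (c j) :=
      Finset.sum_nonneg fun j _ => νc_nn j
    have hsum0 : ∑ j ∈ Finset.Ico (m I) (m i), ν (c j) = 0 := by linarith
    have hνck : ν (c k) = 0 :=
      (Finset.sum_eq_zero_iff_of_nonneg fun j _ => νc_nn j).mp hsum0 k
        (Finset.mem_Ico.mpr ⟨hk, hki⟩)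
    exact νzero (c k) (hcM k) hνck
  refine ⟨m I, fun n hn => ⟨0, zero_mem M, ?_⟩⟩
  have htel := tele' (m I) n hn
  have hzero : ∑ k ∈ Finset.Ico (m I) n, c k = 0 := by
    apply Finset.sum_eq_zero
    intro k hk
    exact hczero k (Finset.mem_Ico.mp hk).1
  rw [hzero, add_zero] at htel
  rw [← htel, add_zero]
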